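/- arXiv:1512.06902 — 2 statements merged into one kernel-verified Lean document; each statement's English description precedes it below -/
import Mathlib

section
/- If a, b : ℕ → ℂ are both C-finite sequences (each satisfying some linear recurrence with constant complex coefficients), then the pointwise product sequence n ↦ a(n)·b(n) is also C-finite. -/
/-- A sequence is C-finite if it satisfies a homogeneous linear recurrence with
constant complex coefficients. -/
def IsCFinite (a : ℕ → ℂ) : Prop :=
  ∃ L : ℕ, 0 < L ∧ ∃ c : ℕ → ℂ,
    ∀ n, L ≤ n → a n = ∑ i ∈ Finset.Icc 1 L, c i * a (n - i)

open Finset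

/-- The shift of a sequence by `k`. -/
def shiftSeq (a : ℕ → ℂ) (k : ℕ) : ℕ → ℂ := fun n => a (n + k)

/-- All shifts of `a` lie in the span of a finite set of sequences. -/
def GoodSeq (a : ℕ → ℂ) : Prop :=
  ∃ s : Finset (ℕ → ℂ), ∀ k, shiftSeq a k ∈ Submodule.span ℂ (s : Set (ℕ → ℂ))

lemma goodSeq_of_isCFinite {a : ℕ → ℂ} (ha : IsCFinite a) : GoodSeq a := by
  obtain ⟨L, hL, c, hc⟩ := ha
  classical
  refine ⟨(Finset.range L).image (shiftSeq a), ?_⟩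
  intro k
  induction k using Nat.strong_induction_on with
  | h k ih =>
    rcases lt_or_ge k L with h | h
    · refine Submodule.subset_span ?_
      simp only [coe_image, Set.mem_image, mem_coe, mem_range]
      exact ⟨k, h, rfl⟩
    · have hk : shiftSeq a k = ∑ i ∈ Icc 1 L, c i • shiftSeq a (k - i) := by
        funext n
        have h1 : L ≤ n + k := le_trans h (Nat.le_add_left _ _)
        simp only [Finset.sum_apply, Pi.smul_apply, smul_eq_mul, shiftSeq]
        rw [hc (n + k) h1]
        refine Finset.sum_congr rfl fun i hi => ?_
        simp only [mem_Icc] at hi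
        rw [Nat.add_sub_assoc (le_trans hi.2 h)]
      rw [hk]
      refine Submodule.sum_mem _ fun i hi => ?_
      simp only [mem_Icc] at hi
      exact Submodule.smul_mem _ _ (ih _ (Nat.sub_lt (lt_of_lt_of_le hL h) hi.1))

open Pointwise in
lemma GoodSeq.mul {a b : ℕ → ℂ} (ha : GoodSeq a) (hb : GoodSeq b) :
    GoodSeq (fun n => a n * b n) := by
  obtain ⟨s, hs⟩ := ha
  obtain ⟨t, ht⟩ := hb
  classical
  refine ⟨s * t, fun k => ?_⟩
  have hsh : shiftSeq (fun n => a n * b n) k = shiftSeq a k * shiftSeq b k := rfl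
  rw [hsh, Finset.coe_mul, ← Submodule.span_mul_span]
  exact Submodule.mul_mem_mul (hs k) (ht k)

lemma isCFinite_of_goodSeq {a : ℕ → ℂ} (ha : GoodSeq a) : IsCFinite a := by
  obtain ⟨s, hs⟩ := ha
  set V := Submodule.span ℂ (s : Set (ℕ → ℂ)) with hV
  set d := s.card with hd
  -- the d+1 shifts are linearly dependent in V
  have hnotind : ¬ LinearIndependent ℂ
      (fun i : Fin (d + 1) => (⟨shiftSeq a i, hs i⟩ : V)) := by
    intro h
    have h1 := h.fintype_card_le_finrank
    have h2 : Module.finrank ℂ V ≤ d := finrank_span_finset_le_card s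
    simp [Fintype.card_fin] at h1
    omega
  rw [Fintype.not_linearIndependent_iff] at hnotind
  obtain ⟨g, hg, i0, hi0⟩ := hnotind
  -- transfer to coefficient function on ℕ
  set G : ℕ → ℂ := fun i => if h : i < d + 1 then g ⟨i, h⟩ else 0 with hG
  have hrel : ∀ n, ∑ i ∈ range (d + 1), G i * a (n + i) = 0 := by
    intro n
    have h0 : ((∑ i : Fin (d+1), g i • (⟨shiftSeq a i, hs i⟩ : V) : V) : ℕ → ℂ) = 0 := by
      rw [hg]; rfl
    have h1 : (∑ i : Fin (d+1), g i • shiftSeq a (i : ℕ)) = (0 : ℕ → ℂ) := by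
      rw [← h0]; push_cast; rfl
    have h2 := congrFun h1 n
    simp only [Finset.sum_apply, Pi.smul_apply, smul_eq_mul, Pi.zero_apply, shiftSeq] at h2
    calc ∑ i ∈ range (d + 1), G i * a (n + i)
        = ∑ i : Fin (d + 1), G (i : ℕ) * a (n + (i : ℕ)) :=
          (Fin.sum_univ_eq_sum_range (fun i => G i * a (n + i)) (d + 1)).symm
      _ = ∑ i : Fin (d + 1), g i * a (n + (i : ℕ)) := by
          refine Finset.sum_congr rfl fun i _ => ?_
          simp [hG, i.isLt, Nat.not_lt.mpr i.is_le]
      _ = 0 := h2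
  have hGne : ∃ i ∈ range (d+1), G i ≠ 0 := ⟨i0, by simp [i0.isLt, i0.is_le], by simp [hG, i0.isLt, hi0, i0.is_le]⟩
  set T := (range (d+1)).filter (fun i => G i ≠ 0) with hT
  have hTne : T.Nonempty := by
    obtain ⟨i, hi, hne⟩ := hGne
    exact ⟨i, by simp [hT, hi, hne]⟩
  set m := T.max' hTne with hm
  have hmT : m ∈ T := T.max'_mem hTne
  have hGm : G m ≠ 0 := (Finset.mem_filter.mp hmT).2
  have hmd : m < d + 1 := Finset.mem_range.mp (Finset.mem_filter.mp hmT).1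
  have hle : ∀ i, G i ≠ 0 → i ≤ m := by
    intro i hi
    rcases lt_or_ge i (d+1) with h | h
    · exact T.le_max' i (by simp [hT, Finset.mem_range.mpr h, hi])
    · exact absurd (by simp [hG, Nat.not_lt.mpr h, (Nat.not_le.mpr h : ¬ i ≤ d)]) hi
  -- key relation
  have hkey : ∀ n, G m * a (n + m) + ∑ i ∈ range m, G i * a (n + i) = 0 := by
    intro n
    have h1 : ∑ i ∈ range (m + 1), G i * a (n + i) = 0 := by
      rw [← hrel n]
      refine Finset.sum_subset (Finset.range_subset_range.mpr (by omega)) ?_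
      intro i _ hi
      rw [Finset.mem_range, not_lt] at hi
      have hGi : G i = 0 := by
        by_contra hne
        exact absurd (hle i hne) (by omega)
      rw [hGi, zero_mul]
    rw [Finset.sum_range_succ] at h1
    rw [add_comm]
    exact h1
  rcases Nat.eq_zero_or_pos m with hm0 | hm0
  · -- a is identically zero
    have haz : ∀ n, a n = 0 := by
      intro n
      have := hkey n
      rw [hm0] at this
      simp at this
      rcases this with h | h
      · rw [hm0] at hGm; exact absurd h hGm
      · exact h
    refine ⟨1, one_pos, fun _ => 0, fun n _ => ?_⟩
    simp [haz]
  · refine ⟨m, hm0, fun j => -(G (m - j)) / G m, fun n hn => ?_⟩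
    have h1 := hkey (n - m)
    rw [Nat.sub_add_cancel hn] at h1
    have h2 : ∑ i ∈ range m, G i * a (n - m + i) = ∑ j ∈ Icc 1 m, G (m - j) * a (n - j) := by
      refine Finset.sum_nbij' (fun i => m - i) (fun j => m - j) ?_ ?_ ?_ ?_ ?_
      · intro i hi
        rw [Finset.mem_range] at hi
        rw [Finset.mem_Icc]
        omega
      · intro j hj
        rw [Finset.mem_Icc] at hj
        rw [Finset.mem_range]
        omega
      · intro i hi
        rw [Finset.mem_range] at hi
        omega
      · intro j hj
        rw [Finset.mem_Icc] at hj
        omega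
      · intro i hi
        rw [Finset.mem_range] at hi
        rw [show m - (m - i) = i by omega, show n - (m - i) = n - m + i by omega]
    rw [h2] at h1
    have h3 : ∑ j ∈ Icc 1 m, -(G (m - j)) / G m * a (n - j)
        = (-(1 / G m)) * ∑ j ∈ Icc 1 m, G (m - j) * a (n - j) := by
      rw [Finset.mul_sum]
      refine Finset.sum_congr rfl fun j _ => ?_
      field_simp
    rw [h3]
    have h4 : ∑ j ∈ Icc 1 m, G (m - j) * a (n - j) = -(G m * a n) := by
      linear_combination h1
    rw [h4]
    field_simp

/-- The pointwise product of two C-finite sequences is C-finite. -/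
theorem IsCFinite.mul {a b : ℕ → ℂ} (ha : IsCFinite a) (hb : IsCFinite b) :
    IsCFinite (fun n => a n * b n) := by
  exact isCFinite_of_goodSeq ((goodSeq_of_isCFinite ha).mul (goodSeq_of_isCFinite hb))
end

section
/- If a : ℕ → ℂ is a C-finite sequence, then for every positive integer r the sequence n ↦ a(n)^r is C-finite. -/
/-- Every positive power of a C-finite sequence is C-finite. -/
theorem IsCFinite.pow {a : ℕ → ℂ} (ha : IsCFinite a) (r : ℕ) (hr : 0 < r) :
    IsCFinite (fun n => a n ^ r) := by
  classical
  obtain ⟨L, hL, c, hc⟩ := ha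
  -- forward form of the recurrence, valid for all m
  have step : ∀ m, a (m + L) = ∑ i ∈ Finset.Icc 1 L, c i * a (m + (L - i)) := by
    intro m
    rw [hc (m + L) (Nat.le_add_left L m)]
    refine Finset.sum_congr rfl fun i hi => ?_
    have hi' := Finset.mem_Icc.mp hi
    have : m + L - i = m + (L - i) := by omega
    rw [this]
  -- the span of the first L shifts of a
  set U : Submodule ℂ (ℕ → ℂ) :=
    Submodule.span ℂ (Set.range fun j : Fin L => fun n => a (n + (j : ℕ))) with hU
  have shift_mem : ∀ k, (fun n => a (n + k)) ∈ U := by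
    intro k
    induction k using Nat.strong_induction_on with
    | _ k ih =>
      by_cases hk : k < L
      · exact Submodule.subset_span ⟨⟨k, hk⟩, rfl⟩
      · push_neg at hk
        have heq : (fun n => a (n + k))
            = ∑ i ∈ Finset.Icc 1 L, c i • (fun n => a (n + (k - i))) := by
          funext n
          have h1 : a (n + k) = a ((n + (k - L)) + L) := by congr 1; omega
          rw [h1, step, Finset.sum_apply]
          refine Finset.sum_congr rfl fun i hi => ?_
          have hi' := Finset.mem_Icc.mp hi
          simp only [Pi.smul_apply, smul_eq_mul]
          congr 2
          omega
        rw [heq]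
        refine Submodule.sum_mem _ fun i hi => Submodule.smul_mem _ _ ?_
        have hi' := Finset.mem_Icc.mp hi
        exact ih (k - i) (by omega)
  -- the span of all r-fold products of the first L shifts
  set W : Submodule ℂ (ℕ → ℂ) :=
    Submodule.span ℂ (Set.range fun f : Fin r → Fin L =>
      fun n => ∏ t, a (n + (f t : ℕ))) with hW
  have hWfin : FiniteDimensional ℂ W :=
    FiniteDimensional.span_of_finite ℂ (Set.finite_range _)
  have hgW : ∀ k, (fun n => a (n + k) ^ r) ∈ W := by
    intro k
    obtain ⟨d, hd⟩ := (Submodule.mem_span_range_iff_exists_fun ℂ).mp (shift_mem k)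
    have heq : (fun n => a (n + k) ^ r)
        = ∑ f : Fin r → Fin L, (∏ t, d (f t)) • (fun n => ∏ t, a (n + (f t : ℕ))) := by
      funext n
      have h1 : a (n + k) = ∑ j, d j * a (n + (j : ℕ)) := by
        have := congrFun hd n
        simp only [Finset.sum_apply, Pi.smul_apply, smul_eq_mul] at this
        exact this.symm
      rw [h1, Fintype.sum_pow, Finset.sum_apply]
      refine Finset.sum_congr rfl fun f _ => ?_
      simp [Finset.prod_mul_distrib]
    rw [heq]
    exact Submodule.sum_mem _ fun f _ =>
      Submodule.smul_mem _ _ (Submodule.subset_span ⟨f, rfl⟩)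
  -- the family of shifted power sequences, as elements of W
  set h : ℕ → W := fun k => ⟨fun n => a (n + k) ^ r, hgW k⟩ with hh
  have hni : ¬ LinearIndependent ℂ h :=
    Module.Finite.not_linearIndependent_of_infinite h
  obtain ⟨s, cc, hsum, i0, hi0s, hi0⟩ := not_linearIndependent_iff.mp hni
  -- turn the relation into a pointwise identity
  have hsum' : ∀ n, ∑ i ∈ s, cc i * a (n + i) ^ r = 0 := by
    intro n
    have := congrArg (Subtype.val) hsum
    simp only [hh] at this
    have := congrFun this n
    simpa using this
  -- the main claim: some shifted power is a combination of earlier ones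
  have claimB : ∃ K : ℕ, 0 < K ∧ ∃ α : ℕ → ℂ,
      ∀ n, a (n + K) ^ r = ∑ k ∈ Finset.range K, α k * a (n + k) ^ r := by
    set t := s.filter (fun i => cc i ≠ 0) with ht
    have hts : t.Nonempty := ⟨i0, Finset.mem_filter.mpr ⟨hi0s, hi0⟩⟩
    set k0 := t.max' hts with hk0
    have hk0t : k0 ∈ t := t.max'_mem hts
    have hcck0 : cc k0 ≠ 0 := (Finset.mem_filter.mp hk0t).2
    -- restrict the sum to t
    have hsumt : ∀ n, ∑ i ∈ t, cc i * a (n + i) ^ r = 0 := by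
      intro n
      have heq : ∑ i ∈ t, cc i * a (n + i) ^ r = ∑ i ∈ s, cc i * a (n + i) ^ r :=
        Finset.sum_filter_of_ne (fun i _ hne h0 => hne (by rw [h0, zero_mul]))
      rw [heq, hsum' n]
    have hk0rel : ∀ n, a (n + k0) ^ r
        = ∑ i ∈ t.erase k0, (-(cc k0)⁻¹ * cc i) * a (n + i) ^ r := by
      intro n
      have h0 := hsumt n
      rw [← Finset.add_sum_erase _ _ hk0t] at h0
      have hS : ∑ i ∈ t.erase k0, (-(cc k0)⁻¹ * cc i) * a (n + i) ^ r
          = -(cc k0)⁻¹ * ∑ i ∈ t.erase k0, cc i * a (n + i) ^ r := by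
        rw [Finset.mul_sum]
        exact Finset.sum_congr rfl fun i _ => by ring
      apply mul_left_cancel₀ hcck0
      rw [hS]
      have h1 : cc k0 * (-(cc k0)⁻¹ * ∑ i ∈ t.erase k0, cc i * a (n + i) ^ r)
          = - ∑ i ∈ t.erase k0, cc i * a (n + i) ^ r := by
        field_simp
      rw [h1]
      linear_combination h0
    by_cases hk00 : k0 = 0
    · -- then a ^ r is identically 0
      have haz : ∀ n, a n = 0 := by
        intro n
        have h0 := hk0rel n
        rw [hk00] at h0
        have he : (t.erase 0) = ∅ := by
          apply Finset.eq_empty_of_forall_notMem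
          intro x hx
          have hx1 := Finset.mem_erase.mp hx
          have hx2 : x ≤ k0 := Finset.le_max' t x hx1.2
          have hx3 := hx1.1
          omega
        rw [he, Finset.sum_empty] at h0
        have h2 : a (n + 0) ^ r = 0 := h0
        rw [Nat.add_zero] at h2
        exact pow_eq_zero_iff hr.ne' |>.mp h2
      refine ⟨1, Nat.one_pos, 0, fun n => by simp [haz, hr.ne']⟩
    · refine ⟨k0, Nat.pos_of_ne_zero hk00, fun k => if k ∈ t then -(cc k0)⁻¹ * cc k else 0,
        fun n => ?_⟩
      rw [hk0rel n]
      have hsub : t.erase k0 ⊆ Finset.range k0 := by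
        intro x hx
        have hx1 := Finset.mem_erase.mp hx
        have hx2 : x ≤ k0 := Finset.le_max' t x hx1.2
        have hx3 := hx1.1
        exact Finset.mem_range.mpr (by omega)
      rw [← Finset.sum_subset hsub (fun x hx hxt => ?_)]
      · refine Finset.sum_congr rfl fun i hi => ?_
        have hi1 := (Finset.mem_erase.mp hi).2
        simp [hi1]
      · have hxk0 : x ≠ k0 := by
          have := Finset.mem_range.mp hx; omega
        have hxt' : x ∉ t := fun hxt' => hxt (Finset.mem_erase.mpr ⟨hxk0, hxt'⟩)
        simp [hxt']
  obtain ⟨K, hK, α, hα⟩ := claimB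
  refine ⟨K, hK, fun i => α (K - i), fun n hn => ?_⟩
  simp only []
  have h1 : a n ^ r = a ((n - K) + K) ^ r := by
    rw [Nat.sub_add_cancel hn]
  rw [h1, hα (n - K)]
  refine Finset.sum_nbij' (fun k => K - k) (fun i => K - i) ?_ ?_ ?_ ?_ ?_
  · intro k hk
    have := Finset.mem_range.mp hk
    exact Finset.mem_Icc.mpr ⟨by omega, by omega⟩
  · intro i hi
    have := Finset.mem_Icc.mp hi
    exact Finset.mem_range.mpr (by omega)
  · intro k hk
    have := Finset.mem_range.mp hk
    omega
  · intro i hi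
    have := Finset.mem_Icc.mp hi
    omega
  · intro k hk
    have hk' := Finset.mem_range.mp hk
    have h2 : K - (K - k) = k := by omega
    have h3 : n - (K - k) = n - K + k := by omega
    rw [h2, h3]
end
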